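/- arXiv:1208.2864 — 10 statements merged into one kernel-verified Lean document; each statement's English description precedes it below -/
import Mathlib

section
/- For every two non-empty finite subsets A and B of a set S, the l¹-norm of the difference of the normalized characteristic functions χ_A/|A| and χ_B/|B| satisfies |AΔB|/max(|A|,|B|) ≤ |A∖B|/|A| + |B∖A|/|B| ≤ ‖χ_A/|A| − χ_B/|B|‖₁ ≤ 2·|AΔB|/min(|A|,|B|). -/
set_option maxHeartbeats 1000000

/-- Lemma 3.3: for non-empty finite subsets `A, B` of `S`,
`|AΔB|/max(|A|,|B|) ≤ |A∖B|/|A| + |B∖A|/|B| ≤ ‖χ_A/|A| − χ_B/|B|‖₁ ≤ 2·|AΔB|/min(|A|,|B|)`,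
where the `l¹`-norm is computed as the sum over `A ∪ B` (the support of the difference). -/
theorem stmt_0 {S : Type*} [DecidableEq S] (A B : Finset S)
    (hA : A.Nonempty) (hB : B.Nonempty) :
    (((A \ B) ∪ (B \ A)).card : ℝ) / (max A.card B.card : ℕ) ≤
        ((A \ B).card : ℝ) / A.card + ((B \ A).card : ℝ) / B.card ∧
    ((A \ B).card : ℝ) / A.card + ((B \ A).card : ℝ) / B.card ≤
        ∑ s ∈ A ∪ B,
          |(if s ∈ A then (1 : ℝ) else 0) / A.card - (if s ∈ B then (1 : ℝ) else 0) / B.card| ∧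
    ∑ s ∈ A ∪ B,
        |(if s ∈ A then (1 : ℝ) else 0) / A.card - (if s ∈ B then (1 : ℝ) else 0) / B.card| ≤
      2 * (((A \ B) ∪ (B \ A)).card : ℝ) / (min A.card B.card : ℕ) := by
  classical
  set a : ℝ := (A.card : ℝ) with ha
  set b : ℝ := (B.card : ℝ) with hb
  have ha1 : (1:ℝ) ≤ a := Nat.one_le_cast.mpr hA.card_pos
  have hb1 : (1:ℝ) ≤ b := Nat.one_le_cast.mpr hB.card_pos
  have ha0 : (0:ℝ) < a := lt_of_lt_of_le one_pos ha1
  have hb0 : (0:ℝ) < b := lt_of_lt_of_le one_pos hb1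
  set x : ℝ := ((A \ B).card : ℝ) with hx
  set y : ℝ := ((B \ A).card : ℝ) with hy
  set i : ℝ := ((A ∩ B).card : ℝ) with hi
  have hx0 : 0 ≤ x := by positivity
  have hy0 : 0 ≤ y := by positivity
  have hi0 : 0 ≤ i := by positivity
  have hax : a = x + i := by
    rw [ha, hx, hi]
    exact_mod_cast (Finset.card_sdiff_add_card_inter A B).symm
  have hby : b = y + i := by
    rw [hb, hy, hi]
    have := Finset.card_sdiff_add_card_inter B A
    rw [Finset.inter_comm] at this
    exact_mod_cast this.symm
  have hdisj1 : Disjoint (A \ B) (B \ A) := by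
    rw [Finset.disjoint_left]; intro s hs hs'
    simp only [Finset.mem_sdiff] at *; tauto
  have hcardΔ : (((A \ B) ∪ (B \ A)).card : ℝ) = x + y := by
    rw [hx, hy]
    exact_mod_cast Finset.card_union_of_disjoint hdisj1
  have hdecomp : A ∪ B = (A \ B) ∪ ((B \ A) ∪ (A ∩ B)) := by
    ext s; simp [Finset.mem_union, Finset.mem_sdiff, Finset.mem_inter]; tauto
  have hd2 : Disjoint (B \ A) (A ∩ B) := by
    rw [Finset.disjoint_left]; intro s hs hs'
    simp only [Finset.mem_sdiff, Finset.mem_inter] at *; tauto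
  have hd3 : Disjoint (A \ B) ((B \ A) ∪ (A ∩ B)) := by
    rw [Finset.disjoint_left]; intro s hs hs'
    simp only [Finset.mem_sdiff, Finset.mem_union, Finset.mem_inter] at *; tauto
  have hsum : ∑ s ∈ A ∪ B,
        |(if s ∈ A then (1 : ℝ) else 0) / A.card - (if s ∈ B then (1 : ℝ) else 0) / B.card|
      = x / a + y / b + i * |1/a - 1/b| := by
    rw [hdecomp, Finset.sum_union hd3, Finset.sum_union hd2]
    have e1 : ∀ s ∈ A \ B,
        |(if s ∈ A then (1 : ℝ) else 0) / A.card - (if s ∈ B then (1 : ℝ) else 0) / B.card|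
        = 1 / a := by
      intro s hs
      simp only [Finset.mem_sdiff] at hs
      rw [if_pos hs.1, if_neg hs.2, ← ha, ← hb, zero_div, sub_zero,
        abs_of_nonneg (by positivity)]
    have e2 : ∀ s ∈ B \ A,
        |(if s ∈ A then (1 : ℝ) else 0) / A.card - (if s ∈ B then (1 : ℝ) else 0) / B.card|
        = 1 / b := by
      intro s hs
      simp only [Finset.mem_sdiff] at hs
      rw [if_pos hs.1, if_neg hs.2, ← ha, ← hb, zero_div, zero_sub, abs_neg,
        abs_of_nonneg (by positivity)]
    have e3 : ∀ s ∈ A ∩ B,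
        |(if s ∈ A then (1 : ℝ) else 0) / A.card - (if s ∈ B then (1 : ℝ) else 0) / B.card|
        = |1/a - 1/b| := by
      intro s hs
      rw [Finset.mem_inter] at hs
      rw [if_pos hs.1, if_pos hs.2, ← ha, ← hb]
    rw [Finset.sum_congr rfl e1, Finset.sum_congr rfl e2, Finset.sum_congr rfl e3,
      Finset.sum_const, Finset.sum_const, Finset.sum_const, nsmul_eq_mul, nsmul_eq_mul,
      nsmul_eq_mul, ← hx, ← hy, ← hi]
    ring
  have hmax : ((max A.card B.card : ℕ) : ℝ) = max a b := by
    rw [ha, hb, Nat.cast_max]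
  have hmin : ((min A.card B.card : ℕ) : ℝ) = min a b := by
    rw [ha, hb, Nat.cast_min]
  rw [hsum, hcardΔ, hmax, hmin]
  refine ⟨?_, ?_, ?_⟩
  · rcases le_total a b with h | h
    · rw [max_eq_right h]
      have h1 : x / b ≤ x / a := div_le_div_of_nonneg_left hx0 ha0 h
      have h2 : (x + y) / b = x / b + y / b := by ring
      linarith
    · rw [max_eq_left h]
      have h1 : y / a ≤ y / b := div_le_div_of_nonneg_left hy0 hb0 h
      have h2 : (x + y) / a = x / a + y / a := by ring
      linarith
  · nlinarith [mul_nonneg hi0 (abs_nonneg (1/a - 1/b))]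
  · rcases le_total a b with h | h
    · rw [min_eq_left h]
      have hnn : (0:ℝ) ≤ 1/a - 1/b := by
        have : 1/b ≤ 1/a := one_div_le_one_div_of_le ha0 h
        linarith
      rw [abs_of_nonneg hnn]
      have hi_le : i ≤ b := by rw [hby]; linarith
      have key : i * (1/a - 1/b) = i * (b - a) / (a * b) := by
        field_simp
      have hba : b - a = y - x := by rw [hax, hby]; ring
      have h1 : i * (b - a) / (a * b) ≤ (y - x) / a := by
        rw [hba, div_le_div_iff₀ (by positivity) ha0]
        have hyx : (0:ℝ) ≤ y - x := by linarith
        nlinarith [mul_nonneg (mul_nonneg hyx ha0.le) (by linarith : (0:ℝ) ≤ b - i)]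
      have h2 : y / b ≤ y / a := div_le_div_of_nonneg_left hy0 ha0 h
      rw [key]
      have he : 2 * (x + y) / a = x/a + y/a + (y - x)/a + 2*x/a := by ring
      rw [he]
      have hxa : 0 ≤ 2*x/a := div_nonneg (by linarith) ha0.le
      linarith
    · rw [min_eq_right h]
      have hnp : 1/a - 1/b ≤ 0 := by
        have : 1/a ≤ 1/b := one_div_le_one_div_of_le hb0 h
        linarith
      rw [abs_of_nonpos hnp, neg_sub]
      have hi_le : i ≤ a := by rw [hax]; linarith
      have key : i * (1/b - 1/a) = i * (a - b) / (a * b) := by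
        field_simp
      have hba : a - b = x - y := by rw [hax, hby]; ring
      have h1 : i * (a - b) / (a * b) ≤ (x - y) / b := by
        rw [hba, div_le_div_iff₀ (by positivity) hb0]
        have hxy : (0:ℝ) ≤ x - y := by linarith
        nlinarith [mul_nonneg (mul_nonneg hxy hb0.le) (by linarith : (0:ℝ) ≤ a - i)]
      have h2 : x / a ≤ x / b := div_le_div_of_nonneg_left hx0 hb0 h
      rw [key]
      have he : 2 * (x + y) / b = x/b + y/b + (x - y)/b + 2*y/b := by ring
      rw [he]
      have hyb : 0 ≤ 2*y/b := div_nonneg (by linarith) hb0.le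
      linarith
end

section
/- Let G be a group and F(1) ⊆ F(2) ⊆ ... finite subsets of G, and for each n let φ_{F(n)} : G → l¹(G) be the barycentric partition of unity φ_F(x) = χ_{xF}/|F|. Then ‖φ_{F(n)}(x) − φ_{F(n)}(y)‖₁ → 0 as n → ∞ for all pairs x, y ∈ G if and only if lim_{n→∞} |gF(n) Δ F(n)|/|F(n)| = 0 for every g ∈ G (the Følner condition). -/
open Filter Topology

lemma stmt_5_aux {G : Type*} [DecidableEq G] (A B : Finset G) {c : ℝ} (hc : 0 < c) :
    ∑ g ∈ A ∪ B,
        |(if g ∈ A then (1 : ℝ) else 0) / c - (if g ∈ B then (1 : ℝ) else 0) / c|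
      = ((A \ B ∪ B \ A).card : ℝ) / c := by
  have h : ∀ g ∈ A ∪ B,
      |(if g ∈ A then (1 : ℝ) else 0) / c - (if g ∈ B then (1 : ℝ) else 0) / c|
        = if g ∈ A \ B ∪ B \ A then 1 / c else 0 := by
    intro g hg
    by_cases hA : g ∈ A <;> by_cases hB : g ∈ B <;>
      simp_all [Finset.mem_union, Finset.mem_sdiff, abs_of_nonneg, hc.le, abs_of_nonpos,
        neg_div, div_nonneg, hc.le]
  rw [Finset.sum_congr rfl h, Finset.sum_ite_mem,
    Finset.inter_eq_right.mpr (Finset.union_subset (Finset.sdiff_subset.trans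
      Finset.subset_union_left) (Finset.sdiff_subset.trans Finset.subset_union_right)),
    Finset.sum_const, nsmul_eq_mul]
  ring

/-- cf. Proposition 3.4: for an increasing sequence of non-empty finite
subsets `F n` of a group `G`, with `φ_F(x) = χ_{xF}/|F|`, the quantities
`‖φ_{F n}(x) − φ_{F n}(y)‖₁` tend to `0` for all `x, y ∈ G` if and only if
`|gF(n) Δ F(n)|/|F(n)| → 0` for every `g ∈ G` (the Følner condition).
The `l¹`-norm is computed as a sum over the support `xF(n) ∪ yF(n)`. -/
theorem stmt_5 {G : Type*} [Group G] [DecidableEq G] (F : ℕ → Finset G)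
    (hne : ∀ n, (F n).Nonempty) (hmono : Monotone F) :
    (∀ x y : G,
        Tendsto (fun n =>
          ∑ g ∈ (F n).image (x * ·) ∪ (F n).image (y * ·),
            |(if g ∈ (F n).image (x * ·) then (1 : ℝ) else 0) / (F n).card -
              (if g ∈ (F n).image (y * ·) then (1 : ℝ) else 0) / (F n).card|)
          atTop (𝓝 0)) ↔
      ∀ g : G,
        Tendsto (fun n =>
            ((((F n).image (g * ·) \ F n) ∪ (F n \ (F n).image (g * ·))).card : ℝ) /
              (F n).card)
          atTop (𝓝 0) := by
  have hc : ∀ n, (0 : ℝ) < (F n).card := fun n => by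
    exact_mod_cast Finset.card_pos.mpr (hne n)
  have hinj : ∀ a : G, Function.Injective (a * ·) := fun a => mul_right_injective a
  have hval : ∀ x y n,
      ∑ g ∈ (F n).image (x * ·) ∪ (F n).image (y * ·),
          |(if g ∈ (F n).image (x * ·) then (1 : ℝ) else 0) / (F n).card -
            (if g ∈ (F n).image (y * ·) then (1 : ℝ) else 0) / (F n).card|
        = ((((F n).image ((y⁻¹ * x) * ·) \ F n) ∪ (F n \ (F n).image ((y⁻¹ * x) * ·))).card : ℝ) /
            (F n).card := by
    intro x y n
    rw [stmt_5_aux _ _ (hc n)]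
    congr 2
    have himg : ((F n).image ((y⁻¹ * x) * ·) \ F n ∪ F n \ (F n).image ((y⁻¹ * x) * ·)).image
          (y * ·)
        = (F n).image (x * ·) \ (F n).image (y * ·) ∪
            (F n).image (y * ·) \ (F n).image (x * ·) := by
      have he : ((y * ·) ∘ ((y⁻¹ * x) * ·)) = (x * ·) := by
        funext a; simp [mul_assoc]
      rw [Finset.image_union, Finset.image_sdiff _ _ (hinj y),
        Finset.image_sdiff _ _ (hinj y), Finset.image_image, he]
    rw [← himg, Finset.card_image_of_injective _ (hinj y)]
  constructor
  · intro h g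
    have := h g 1
    simp only [hval] at this
    simpa using this
  · intro h x y
    simp only [hval]
    exact h _
end

section
/- If a metric space X is separable at scale r (i.e., there is a countable subset S with B(S,r) = X), then there exists a 6r-cobounded barycentric partition of unity f on X whose Lebesgue number is at least r. -/
/-- Proposition 3.9: if a metric space `X` is separable at scale `r`
(there is a countable `S ⊆ X` with `B(S,r) = X`), then there is a `6r`-cobounded
barycentric partition of unity on `X` whose Lebesgue number is at least `r`.
The barycentric partition of unity `f x = χ_{C x}/|C x|` is encoded by the finite
non-empty carriers `C : X → Finset V`; its `v`-th carrier set is `{x | v ∈ C x}`.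
`6r`-cobounded: any two points of a carrier set are at distance `< 6r`; Lebesgue
number at least `r`: every open `r`-ball is contained in some carrier set. -/
theorem stmt_7 {X : Type*} [MetricSpace X] (r : ℝ) (hr : 0 < r)
    (S : Set X) (hS : S.Countable) (hdense : ∀ x : X, ∃ s ∈ S, dist x s < r) :
    ∃ (V : Type) (C : X → Finset V),
      (∀ x, (C x).Nonempty) ∧
      (∀ v : V, ∀ x y : X, v ∈ C x → v ∈ C y → dist x y < 6 * r) ∧
      (∀ x : X, ∃ v : V, ∀ y : X, dist y x < r → v ∈ C y) := by
  classical
  rcases isEmpty_or_nonempty X with h | hX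
  · exact ⟨ℕ, fun x => ∅, fun x => h.elim x, fun v x => h.elim x, fun x => h.elim x⟩
  · obtain ⟨x0⟩ := hX
    obtain ⟨s0, hs0, _⟩ := hdense x0
    obtain ⟨e, he⟩ := Set.Countable.exists_eq_range hS ⟨s0, hs0⟩
    have hex : ∀ x : X, ∃ n, dist x (e n) < r := by
      intro x
      obtain ⟨s, hs, hlt⟩ := hdense x
      rw [he] at hs
      obtain ⟨n, rfl⟩ := hs
      exact ⟨n, hlt⟩
    have hex2 : ∀ x : X, ∃ n, dist x (e n) < 2 * r := fun x =>
      (hex x).imp (fun n h => by linarith)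
    set N : X → ℕ := fun x => Nat.find (hex x) with hN
    refine ⟨ℕ, fun x => (Finset.range (N x + 1)).filter (fun n => dist x (e n) < 3 * r),
      ?_, ?_, ?_⟩
    · intro x
      refine ⟨N x, Finset.mem_filter.mpr ⟨Finset.mem_range.mpr (Nat.lt_succ_self _), ?_⟩⟩
      have := Nat.find_spec (hex x)
      linarith
    · intro v x y hx hy
      simp only [Finset.mem_filter] at hx hy
      calc dist x y ≤ dist x (e v) + dist (e v) y := dist_triangle _ _ _
        _ < 6 * r := by rw [dist_comm (e v) y]; linarith [hx.2, hy.2]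
    · intro x
      refine ⟨Nat.find (hex2 x), fun y hy => ?_⟩
      have hm : dist x (e (Nat.find (hex2 x))) < 2 * r := Nat.find_spec (hex2 x)
      refine Finset.mem_filter.mpr ⟨Finset.mem_range.mpr ?_, ?_⟩
      · have hNy : dist y (e (N y)) < r := Nat.find_spec (hex y)
        have hxe : dist x (e (N y)) < 2 * r := by
          calc dist x (e (N y)) ≤ dist x y + dist y (e (N y)) := dist_triangle _ _ _
            _ < 2 * r := by rw [dist_comm x y]; linarith
        exact Nat.lt_succ_of_le (Nat.find_le hxe)
      · calc dist y (e (Nat.find (hex2 x)))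
            ≤ dist y x + dist x (e (Nat.find (hex2 x))) := dist_triangle _ _ _
          _ < 3 * r := by linarith
end

section
/- For a metric space X, the following are equivalent: (a) for each r > 0 there is a uniformly bounded cover U of X such that every r-ball intersects only finitely many elements of U; (b) for all r, s > 0 there is a uniformly bounded cover U of X of Lebesgue number at least s such that every r-ball is contained in only finitely many elements of U; (c) for every uniformly bounded cover U of X there exists a uniformly bounded point-finite cover V of which U is a refinement. -/
/-- A family of subsets covers `X`. -/
def IsCover {X : Type*} (U : Set (Set X)) : Prop := ∀ x : X, ∃ A ∈ U, x ∈ A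

/-- A family of subsets of a metric space is uniformly bounded. -/
def UniformlyBounded {X : Type*} [MetricSpace X] (U : Set (Set X)) : Prop :=
  ∃ M : ℝ, ∀ A ∈ U, ∀ x ∈ A, ∀ y ∈ A, dist x y ≤ M

section Aux

variable {X : Type*} [MetricSpace X]

lemma aux_ab
    (h : ∀ r : ℝ, 0 < r → ∃ U : Set (Set X), IsCover U ∧ UniformlyBounded U ∧
        ∀ x : X, {A ∈ U | (Metric.ball x r ∩ A).Nonempty}.Finite) :
    ∀ r s : ℝ, 0 < r → 0 < s → ∃ U : Set (Set X), IsCover U ∧ UniformlyBounded U ∧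
        (∀ x : X, ∃ A ∈ U, Metric.ball x s ⊆ A) ∧
        ∀ x : X, {A ∈ U | Metric.ball x r ⊆ A}.Finite := by
  intro r s hr hs
  obtain ⟨U, hcov, ⟨M, hM⟩, hfin⟩ := h s hs
  refine ⟨(fun A => {y | ∃ a ∈ A, dist y a < s}) '' U, ?_, ?_, ?_, ?_⟩
  · intro x
    obtain ⟨A, hA, hx⟩ := hcov x
    exact ⟨_, Set.mem_image_of_mem _ hA, x, hx, by simpa using hs⟩
  · refine ⟨M + 2 * s, ?_⟩
    rintro B ⟨A, hA, rfl⟩ x ⟨a, ha, hxa⟩ y ⟨b, hb, hyb⟩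
    have h1 := hM A hA a ha b hb
    have := dist_triangle4 x a b y
    have h2 : dist b y = dist y b := dist_comm b y
    nlinarith
  · intro x
    obtain ⟨A, hA, hx⟩ := hcov x
    refine ⟨_, Set.mem_image_of_mem _ hA, ?_⟩
    intro y hy
    exact ⟨x, hx, Metric.mem_ball.mp hy⟩
  · intro x
    refine ((hfin x).image (fun A => {y | ∃ a ∈ A, dist y a < s})).subset ?_
    rintro B ⟨⟨A, hA, rfl⟩, hB⟩
    have hx : x ∈ {y | ∃ a ∈ A, dist y a < s} := hB (Metric.mem_ball_self hr)
    obtain ⟨a, ha, hxa⟩ := hx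
    exact ⟨A, ⟨hA, ⟨a, Metric.mem_ball'.mpr hxa, ha⟩⟩, rfl⟩

lemma aux_ba
    (h : ∀ r s : ℝ, 0 < r → 0 < s → ∃ U : Set (Set X), IsCover U ∧ UniformlyBounded U ∧
        (∀ x : X, ∃ A ∈ U, Metric.ball x s ⊆ A) ∧
        ∀ x : X, {A ∈ U | Metric.ball x r ⊆ A}.Finite) :
    ∀ r : ℝ, 0 < r → ∃ U : Set (Set X), IsCover U ∧ UniformlyBounded U ∧
        ∀ x : X, {A ∈ U | (Metric.ball x r ∩ A).Nonempty}.Finite := by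
  intro r hr
  obtain ⟨U, hcov, ⟨M, hM⟩, hleb, hfin⟩ := h r (2 * r) hr (by linarith)
  refine ⟨(fun A => {y | Metric.ball y (2 * r) ⊆ A}) '' U, ?_, ?_, ?_⟩
  · intro x
    obtain ⟨A, hA, hx⟩ := hleb x
    exact ⟨_, Set.mem_image_of_mem _ hA, hx⟩
  · refine ⟨M, ?_⟩
    rintro B ⟨A, hA, rfl⟩ x hx y hy
    exact hM A hA x (hx (Metric.mem_ball_self (by linarith)))
      y (hy (Metric.mem_ball_self (by linarith)))
  · intro x
    refine ((hfin x).image (fun A => {y | Metric.ball y (2 * r) ⊆ A})).subset ?_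
    rintro B ⟨⟨A, hA, rfl⟩, y, hy1, hy2⟩
    refine ⟨A, ⟨hA, ?_⟩, rfl⟩
    intro z hz
    refine hy2 ?_
    have h1 : dist z x < r := Metric.mem_ball.mp hz
    have h2 : dist y x < r := Metric.mem_ball.mp hy1
    have := dist_triangle z x y
    have := dist_comm y x
    refine Metric.mem_ball.mpr ?_
    calc dist z y ≤ dist z x + dist x y := dist_triangle z x y
      _ < r + r := by rw [dist_comm x y]; linarith
      _ = 2 * r := by ring

lemma aux_bc
    (h : ∀ r s : ℝ, 0 < r → 0 < s → ∃ U : Set (Set X), IsCover U ∧ UniformlyBounded U ∧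
        (∀ x : X, ∃ A ∈ U, Metric.ball x s ⊆ A) ∧
        ∀ x : X, {A ∈ U | Metric.ball x r ⊆ A}.Finite) :
    ∀ U : Set (Set X), IsCover U → UniformlyBounded U →
      ∃ V : Set (Set X), IsCover V ∧ UniformlyBounded V ∧
        (∀ x : X, {A ∈ V | x ∈ A}.Finite) ∧
        ∀ A ∈ U, ∃ B ∈ V, A ⊆ B := by
  intro U hUcov ⟨M, hM⟩
  set M' : ℝ := max M 0 with hM'
  have hM'0 : 0 ≤ M' := le_max_right M 0
  obtain ⟨W, hWcov, ⟨N, hN⟩, hleb, hfin⟩ := h 1 (M' + 3) one_pos (by linarith)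
  refine ⟨(fun A => {y | Metric.ball y 2 ⊆ A}) '' W ∪ {∅}, ?_, ?_, ?_, ?_⟩
  · intro x
    obtain ⟨A, hA, hx⟩ := hleb x
    refine ⟨_, Or.inl (Set.mem_image_of_mem _ hA), ?_⟩
    intro z hz
    refine hx (Metric.mem_ball.mpr ?_)
    have := Metric.mem_ball.mp hz
    linarith
  · refine ⟨max N 0, ?_⟩
    rintro B (⟨A, hA, rfl⟩ | hB) x hx y hy
    · exact le_trans (hN A hA x (hx (Metric.mem_ball_self two_pos))
        y (hy (Metric.mem_ball_self two_pos))) (le_max_left N 0)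
    · simp only [Set.mem_singleton_iff] at hB
      subst hB; exact absurd hx (Set.notMem_empty x)
  · intro x
    refine ((hfin x).image (fun A => {y | Metric.ball y 2 ⊆ A})).subset ?_
    rintro B ⟨(⟨A, hA, rfl⟩ | hB), hxB⟩
    · refine ⟨A, ⟨hA, ?_⟩, rfl⟩
      intro z hz
      refine hxB (Metric.mem_ball.mpr ?_)
      have := Metric.mem_ball.mp hz
      linarith
    · simp only [Set.mem_singleton_iff] at hB
      subst hB; exact absurd hxB (Set.notMem_empty x)
  · intro A hA
    rcases Set.eq_empty_or_nonempty A with rfl | ⟨a, ha⟩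
    · exact ⟨∅, Or.inr rfl, Set.empty_subset _⟩
    · obtain ⟨A', hA', hball⟩ := hleb a
      refine ⟨_, Or.inl (Set.mem_image_of_mem _ hA'), ?_⟩
      intro y hy
      intro z hz
      refine hball (Metric.mem_ball.mpr ?_)
      have h1 : dist z y < 2 := Metric.mem_ball.mp hz
      have h2 : dist y a ≤ M := hM A hA y hy a ha
      have h3 : M ≤ M' := le_max_left M 0
      calc dist z a ≤ dist z y + dist y a := dist_triangle z y a
        _ < M' + 3 := by linarith

lemma aux_cb
    (h : ∀ U : Set (Set X), IsCover U → UniformlyBounded U →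
      ∃ V : Set (Set X), IsCover V ∧ UniformlyBounded V ∧
        (∀ x : X, {A ∈ V | x ∈ A}.Finite) ∧
        ∀ A ∈ U, ∃ B ∈ V, A ⊆ B) :
    ∀ r s : ℝ, 0 < r → 0 < s → ∃ U : Set (Set X), IsCover U ∧ UniformlyBounded U ∧
        (∀ x : X, ∃ A ∈ U, Metric.ball x s ⊆ A) ∧
        ∀ x : X, {A ∈ U | Metric.ball x r ⊆ A}.Finite := by
  intro r s hr hs
  have hrs : 0 < r + s := by linarith
  obtain ⟨V, hVcov, hVb, hVpf, hVref⟩ :=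
    h (Set.range (fun x : X => Metric.ball x (r + s)))
      (fun x => ⟨_, Set.mem_range_self x, Metric.mem_ball_self hrs⟩)
      ⟨2 * (r + s), by
        rintro B ⟨x, rfl⟩ y hy z hz
        have h1 := Metric.mem_ball.mp hy
        have h2 := Metric.mem_ball.mp hz
        calc dist y z ≤ dist y x + dist x z := dist_triangle y x z
          _ ≤ 2 * (r + s) := by rw [dist_comm x z]; linarith⟩
  refine ⟨V, hVcov, hVb, ?_, ?_⟩
  · intro x
    obtain ⟨B, hB, hsub⟩ := hVref _ (Set.mem_range_self x)
    refine ⟨B, hB, fun z hz => hsub (Metric.mem_ball.mpr ?_)⟩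
    have := Metric.mem_ball.mp hz
    linarith
  · intro x
    refine (hVpf x).subset ?_
    rintro B ⟨hB, hsub⟩
    exact ⟨hB, hsub (Metric.mem_ball_self hr)⟩

end Aux

/-- Proposition 4.3: for a metric space `X` the following are equivalent:
(a) for each `r > 0` there is a uniformly bounded cover `U` such that every `r`-ball
meets only finitely many elements of `U`;
(b) for all `r, s > 0` there is a uniformly bounded cover `U` of Lebesgue number at
least `s` (every `s`-ball is contained in some element) such that every `r`-ball is
contained in only finitely many elements of `U` (large scale weak paracompactness);
(c) every uniformly bounded cover `U` refines some uniformly bounded point-finite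
cover `V`. -/
theorem stmt_8 {X : Type*} [MetricSpace X] :
    ((∀ r : ℝ, 0 < r → ∃ U : Set (Set X), IsCover U ∧ UniformlyBounded U ∧
        ∀ x : X, {A ∈ U | (Metric.ball x r ∩ A).Nonempty}.Finite) ↔
      (∀ r s : ℝ, 0 < r → 0 < s → ∃ U : Set (Set X), IsCover U ∧ UniformlyBounded U ∧
        (∀ x : X, ∃ A ∈ U, Metric.ball x s ⊆ A) ∧
        ∀ x : X, {A ∈ U | Metric.ball x r ⊆ A}.Finite)) ∧
    ((∀ r s : ℝ, 0 < r → 0 < s → ∃ U : Set (Set X), IsCover U ∧ UniformlyBounded U ∧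
        (∀ x : X, ∃ A ∈ U, Metric.ball x s ⊆ A) ∧
        ∀ x : X, {A ∈ U | Metric.ball x r ⊆ A}.Finite) ↔
      (∀ U : Set (Set X), IsCover U → UniformlyBounded U →
        ∃ V : Set (Set X), IsCover V ∧ UniformlyBounded V ∧
          (∀ x : X, {A ∈ V | x ∈ A}.Finite) ∧
          ∀ A ∈ U, ∃ B ∈ V, A ⊆ B)) := by
  exact ⟨⟨aux_ab, aux_ba⟩, ⟨aux_bc, aux_cb⟩⟩
end

section
/- If a metric space X is large scale separable (there is a countable subset S and r > 0 with B(S,r) = X), then X is large scale weakly paracompact. -/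
/-- `X` is large scale weakly paracompact: for all `r, s > 0` there is a uniformly
bounded cover of Lebesgue number at least `s` (every `s`-ball lies in some element)
such that every `r`-ball is contained in only finitely many elements. -/
def LSWeaklyParacompact (X : Type*) [MetricSpace X] : Prop :=
  ∀ r s : ℝ, 0 < r → 0 < s → ∃ U : Set (Set X), IsCover U ∧ UniformlyBounded U ∧
    (∀ x : X, ∃ A ∈ U, Metric.ball x s ⊆ A) ∧
    ∀ x : X, {A ∈ U | Metric.ball x r ⊆ A}.Finite

/-- Corollary 4.4: if a metric space `X` is large scale separable
(there is a countable `S ⊆ X` and `r > 0` with `B(S,r) = X`), then `X` is large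
scale weakly paracompact. -/
theorem stmt_9 {X : Type*} [MetricSpace X]
    (h : ∃ (S : Set X) (r : ℝ), S.Countable ∧ 0 < r ∧ ∀ x : X, ∃ s ∈ S, dist x s < r) :
    LSWeaklyParacompact X := by
  classical
  intro r s hr hs
  rcases isEmpty_or_nonempty X with hX | hX
  · exact ⟨∅, fun x => (hX.false x).elim, ⟨0, by simp⟩,
      fun x => (hX.false x).elim, fun x => (hX.false x).elim⟩
  · obtain ⟨S, R, hSc, hR, hdense⟩ := h
    have hSne : S.Nonempty := by
      obtain ⟨t, ht, _⟩ := hdense hX.some; exact ⟨t, ht⟩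
    obtain ⟨f, hf⟩ := Set.Countable.exists_eq_range hSc hSne
    have hd : ∀ x : X, ∃ n : ℕ, dist x (f n) < R := by
      intro x
      obtain ⟨t, ht, hlt⟩ := hdense x
      rw [hf] at ht
      obtain ⟨n, rfl⟩ := ht
      exact ⟨n, hlt⟩
    set D : ℝ := 2 * R + s with hD
    have hDpos : 0 < D := by positivity
    have hfind : ∀ m : ℕ, ∃ j : ℕ, dist (f j) (f m) < D := fun m => ⟨m, by simpa using hDpos⟩
    set bag : ℕ → ℕ := fun m => Nat.find (hfind m) with hbagdef
    have hbag : ∀ m, dist (f (bag m)) (f m) < D := fun m => Nat.find_spec (hfind m)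
    set n0 : X → ℕ := fun x => Nat.find (hd x) with hn0def
    have hn0 : ∀ x, dist x (f (n0 x)) < R := fun x => Nat.find_spec (hd x)
    set A : ℕ → Set X := fun j => ⋃ m ∈ {m : ℕ | bag m = j}, Metric.ball (f m) (R + s)
      with hA
    have memA : ∀ (j : ℕ) (x : X), x ∈ A j ↔ ∃ m, bag m = j ∧ dist x (f m) < R + s := by
      intro j x
      simp [hA, Metric.mem_ball]
    -- key: membership bounds the index
    have hkey : ∀ (j : ℕ) (x : X), x ∈ A j → j ≤ n0 x := by
      intro j x hx
      obtain ⟨m, hm, hdist⟩ := (memA j x).1 hx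
      have : dist (f (n0 x)) (f m) < D := by
        calc dist (f (n0 x)) (f m) ≤ dist (f (n0 x)) x + dist x (f m) := dist_triangle _ _ _
          _ < R + (R + s) := by
              have := hn0 x
              rw [dist_comm] at this
              linarith
          _ = D := by rw [hD]; ring
      have := Nat.find_min' (hfind m) this
      rw [← hm]
      exact this
    have hAball : ∀ x : X, Metric.ball x s ⊆ A (bag (n0 x)) := by
      intro x y hy
      rw [memA]
      refine ⟨n0 x, rfl, ?_⟩
      calc dist y (f (n0 x)) ≤ dist y x + dist x (f (n0 x)) := dist_triangle _ _ _
        _ < s + R := by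
            have := hn0 x
            have hyx : dist y x < s := Metric.mem_ball.1 hy
            linarith
        _ = R + s := by ring
    refine ⟨Set.range A, ?_, ⟨2 * (D + R + s), ?_⟩, ?_, ?_⟩
    · intro x
      exact ⟨A (bag (n0 x)), ⟨_, rfl⟩, hAball x (Metric.mem_ball_self hs)⟩
    · rintro B ⟨j, rfl⟩ x hx y hy
      obtain ⟨m, hm, hdx⟩ := (memA j x).1 hx
      obtain ⟨m', hm', hdy⟩ := (memA j y).1 hy
      have h1 : dist x (f j) ≤ (R + s) + D := by
        have h2 : dist (f m) (f j) < D := by rw [← hm, dist_comm]; exact hbag m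
        have := dist_triangle x (f m) (f j); linarith
      have h2 : dist y (f j) ≤ (R + s) + D := by
        have h3 : dist (f m') (f j) < D := by rw [← hm', dist_comm]; exact hbag m'
        have := dist_triangle y (f m') (f j); linarith
      have := dist_triangle x (f j) y
      rw [dist_comm (f j) y] at this
      linarith
    · intro x
      exact ⟨A (bag (n0 x)), ⟨_, rfl⟩, hAball x⟩
    · intro x
      apply Set.Finite.subset ((Set.finite_Iic (n0 x)).image A)
      rintro B ⟨⟨j, rfl⟩, hsub⟩
      have hx : x ∈ A j := hsub (Metric.mem_ball_self hr)
      exact ⟨j, hkey j x hx, rfl⟩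
end

section
/- If X coarsely embeds in a large scale weakly paracompact metric space Y, then X is large scale weakly paracompact. -/
open Filter

/-- `f : X → Y` is a coarse embedding: there are non-decreasing unbounded
`ρ₁, ρ₂ : [0,∞) → [0,∞)` with `ρ₁(d(x,y)) ≤ d(f x, f y) ≤ ρ₂(d(x,y))`. -/
def CoarseEmbedding {X Y : Type*} [MetricSpace X] [MetricSpace Y] (f : X → Y) : Prop :=
  ∃ ρ₁ ρ₂ : ℝ → ℝ, Monotone ρ₁ ∧ Monotone ρ₂ ∧
    Tendsto ρ₁ atTop atTop ∧ Tendsto ρ₂ atTop atTop ∧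
    ∀ x y : X, ρ₁ (dist x y) ≤ dist (f x) (f y) ∧ dist (f x) (f y) ≤ ρ₂ (dist x y)

/-- Proposition 4.2: if `X` coarsely embeds in a large scale weakly
paracompact metric space `Y`, then `X` is large scale weakly paracompact. -/
theorem stmt_10 {X Y : Type*} [MetricSpace X] [MetricSpace Y] (f : X → Y)
    (hf : CoarseEmbedding f) (hY : LSWeaklyParacompact Y) :
    LSWeaklyParacompact X := by
  obtain ⟨ρ₁, ρ₂, hm1, hm2, ht1, ht2, hρ⟩ := hf
  intro r s hr hs
  set s' : ℝ := max (ρ₂ s + 1) 1 with hs'def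
  have hs'pos : 0 < s' := lt_max_of_lt_right one_pos
  obtain ⟨V, hcov, ⟨M, hM⟩, hLeb, hfin⟩ := hY 1 s' one_pos hs'pos
  set g : Set Y → Set X := fun B => f ⁻¹' {y | Metric.ball y 1 ⊆ B} with hg
  have hmemg : ∀ (B : Set Y) (x : X), x ∈ g B ↔ Metric.ball (f x) 1 ⊆ B := by
    intro B x; rfl
  have key : ∀ x : X, ∃ A ∈ g '' V, Metric.ball x s ⊆ A := by
    intro x
    obtain ⟨B, hBV, hB⟩ := hLeb (f x)
    refine ⟨g B, ⟨B, hBV, rfl⟩, ?_⟩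
    intro y hy
    rw [hmemg]
    intro z hz
    apply hB
    have h1 : dist z (f x) ≤ dist z (f y) + dist (f y) (f x) := dist_triangle _ _ _
    have h2 : dist (f y) (f x) ≤ ρ₂ (dist y x) := (hρ y x).2
    have h3 : ρ₂ (dist y x) ≤ ρ₂ s := hm2 (le_of_lt (Metric.mem_ball.mp hy))
    have h4 : dist z (f y) < 1 := Metric.mem_ball.mp hz
    have : dist z (f x) < ρ₂ s + 1 := by linarith
    exact Metric.mem_ball.mpr (lt_of_lt_of_le this (le_max_left _ _))
  refine ⟨g '' V, ?_, ?_, key, ?_⟩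
  · intro x
    obtain ⟨A, hA, hball⟩ := key x
    exact ⟨A, hA, hball (Metric.mem_ball_self hs)⟩
  · obtain ⟨D, hD⟩ := (ht1.eventually_gt_atTop M).exists
    refine ⟨D, ?_⟩
    rintro A ⟨B, hBV, rfl⟩ x hx y hy
    have hfx : f x ∈ B := (hmemg B x).mp hx (Metric.mem_ball_self one_pos)
    have hfy : f y ∈ B := (hmemg B y).mp hy (Metric.mem_ball_self one_pos)
    have hMxy : dist (f x) (f y) ≤ M := hM B hBV (f x) hfx (f y) hfy
    by_contra hlt
    push_neg at hlt
    have : ρ₁ D ≤ ρ₁ (dist x y) := hm1 (le_of_lt hlt)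
    have := (hρ x y).1
    linarith
  · intro x
    have hsub : {A ∈ g '' V | Metric.ball x r ⊆ A} ⊆
        g '' {B ∈ V | Metric.ball (f x) 1 ⊆ B} := by
      rintro A ⟨⟨B, hBV, rfl⟩, hball⟩
      exact ⟨B, ⟨hBV, (hmemg B x).mp (hball (Metric.mem_ball_self hr))⟩, rfl⟩
    exact ((hfin (f x)).image g).subset hsub
end

section
/- Every coarsely doubling metric space contains a subspace Y of bounded geometry such that the inclusion Y → X is a coarse equivalence; equivalently, every coarsely doubling metric space has a quasi-lattice. -/
/-- `X` is coarsely doubling: there is `M > 0` such that for every `r > M` there is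
`n(r) ∈ ℕ` with every `2r`-ball coverable by at most `n(r)` many `r`-balls. -/
def CoarselyDoubling (X : Type*) [MetricSpace X] : Prop :=
  ∃ M : ℝ, 0 < M ∧ ∀ r : ℝ, M < r → ∃ n : ℕ, ∀ x : X, ∃ F : Finset X,
    F.card ≤ n ∧ Metric.ball x (2 * r) ⊆ ⋃ y ∈ F, Metric.ball y r

/-- Proposition 5.8(c) / Corollary 5.12: every coarsely doubling
metric space contains a quasi-lattice, i.e. a subset `Y` that is `c`-dense for some
`c > 0` (so that the inclusion `Y → X` is a coarse equivalence) and is of bounded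
geometry (uniform bounds on cardinalities of `r`-balls of `Y`). -/
theorem stmt_12 {X : Type*} [MetricSpace X] (h : CoarselyDoubling X) :
    ∃ Y : Set X,
      (∃ c : ℝ, 0 < c ∧ ∀ x : X, ∃ y ∈ Y, dist x y < c) ∧
      (∀ r : ℝ, 0 < r → ∃ K : ℕ, ∀ y ∈ Y,
        (Y ∩ Metric.ball y r).Finite ∧ (Y ∩ Metric.ball y r).ncard ≤ K) := by
  obtain ⟨M, hM, hd⟩ := h
  classical
  -- maximal 5M-separated set
  obtain ⟨Y, hYmax⟩ := zorn_subset {Y : Set X | Y.Pairwise (fun a b => 5 * M ≤ dist a b)}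
    (fun c hc hchain => ⟨⋃₀ c, fun a ha b hb hab => by
      obtain ⟨s, hs, has⟩ := ha
      obtain ⟨t, ht, hbt⟩ := hb
      rcases hchain.total hs ht with hst | hts
      · exact hc ht (hst has) hbt hab
      · exact hc hs has (hts hbt) hab,
      fun s hs => Set.subset_sUnion_of_mem hs⟩)
  have hYsep : Y.Pairwise (fun a b => 5 * M ≤ dist a b) := hYmax.1
  -- density
  have hdense : ∀ x : X, ∃ y ∈ Y, dist x y < 5 * M := by
    intro x
    by_contra hcon
    push_neg at hcon
    have hxY : x ∉ Y := fun hx => absurd (hcon x hx) (by simp; linarith)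
    have hins : insert x Y ∈ {Y : Set X | Y.Pairwise (fun a b => 5 * M ≤ dist a b)} := by
      refine Set.pairwise_insert.2 ⟨hYsep, fun b hb hxb => ?_⟩
      have := hcon b hb
      exact ⟨by linarith, by rw [dist_comm]; linarith⟩
    have := hYmax.2 hins (Set.subset_insert x Y)
    exact hxY (this (Set.mem_insert x Y))
  -- subsingleton of small balls
  have key : ∀ z : X, (Y ∩ Metric.ball z (2 * M)).Subsingleton := by
    intro z a ha b hb
    by_contra hne
    have hsep := hYsep ha.1 hb.1 hne
    have h1 : dist a z < 2 * M := ha.2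
    have h2 : dist b z < 2 * M := hb.2
    have : dist a b ≤ dist a z + dist z b := dist_triangle a z b
    rw [dist_comm z b] at this
    linarith
  -- iterated covering lemma
  have cover : ∀ k : ℕ, ∃ N : ℕ, ∀ x : X, ∃ F : Finset X,
      F.card ≤ N ∧ Metric.ball x (2 ^ k * (2 * M)) ⊆ ⋃ y ∈ F, Metric.ball y (2 * M) := by
    intro k
    induction k with
    | zero =>
      exact ⟨1, fun x => ⟨{x}, by simp, by simp⟩⟩
    | succ k ih =>
      obtain ⟨N, hN⟩ := ih
      have hpow : (1 : ℝ) ≤ 2 ^ k := one_le_pow₀ (by norm_num)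
      obtain ⟨n, hn⟩ := hd (2 ^ k * (2 * M)) (by nlinarith)
      refine ⟨n * N, fun x => ?_⟩
      obtain ⟨F, hFc, hFcov⟩ := hn x
      choose G hGc hGcov using hN
      refine ⟨F.biUnion G, ?_, ?_⟩
      · calc (F.biUnion G).card ≤ ∑ y ∈ F, (G y).card := Finset.card_biUnion_le
          _ ≤ ∑ _y ∈ F, N := Finset.sum_le_sum (fun y _ => hGc y)
          _ = F.card * N := by rw [Finset.sum_const, smul_eq_mul]
          _ ≤ n * N := Nat.mul_le_mul_right N hFc
      · intro z hz
        have hz' : z ∈ Metric.ball x (2 * (2 ^ k * (2 * M))) := by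
          simp only [Metric.mem_ball] at hz ⊢
          calc dist z x < 2 ^ (k + 1) * (2 * M) := hz
            _ = 2 * (2 ^ k * (2 * M)) := by ring
        have := hFcov hz'
        simp only [Set.mem_iUnion] at this ⊢
        obtain ⟨y, hy, hzy⟩ := this
        have := hGcov y hzy
        simp only [Set.mem_iUnion] at this
        obtain ⟨w, hw, hzw⟩ := this
        exact ⟨w, Finset.mem_biUnion.2 ⟨y, hy, hw⟩, hzw⟩
  refine ⟨Y, ⟨5 * M, by linarith, hdense⟩, ?_⟩
  intro r hr
  obtain ⟨k, hk⟩ := pow_unbounded_of_one_lt (r / (2 * M)) (one_lt_two (α := ℝ))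
  have hrk : r ≤ 2 ^ k * (2 * M) := by
    rw [div_lt_iff₀ (by linarith)] at hk
    linarith
  obtain ⟨N, hN⟩ := cover k
  have bound : ∀ s : Finset X, (⋃ z ∈ s, Y ∩ Metric.ball z (2 * M)).ncard ≤ s.card := by
    intro s
    induction s using Finset.induction with
    | empty => simp
    | @insert a t hx ih =>
      rw [Finset.set_biUnion_insert, Finset.card_insert_of_notMem hx]
      have hone : (Y ∩ Metric.ball a (2 * M)).ncard ≤ 1 := by
        rcases (key a).eq_empty_or_singleton with h | ⟨b, h⟩ <;> simp [h]
      calc ((Y ∩ Metric.ball a (2 * M)) ∪ ⋃ z ∈ t, Y ∩ Metric.ball z (2 * M)).ncard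
          ≤ (Y ∩ Metric.ball a (2 * M)).ncard + (⋃ z ∈ t, Y ∩ Metric.ball z (2 * M)).ncard :=
            Set.ncard_union_le _ _
        _ ≤ 1 + t.card := Nat.add_le_add hone ih
        _ = t.card + 1 := Nat.add_comm _ _
  refine ⟨N, fun y _ => ?_⟩
  obtain ⟨F, hFc, hFcov⟩ := hN y
  have hsub : Y ∩ Metric.ball y r ⊆ ⋃ z ∈ F, Y ∩ Metric.ball z (2 * M) := by
    rintro x ⟨hxY, hxb⟩
    have hx' : x ∈ Metric.ball y (2 ^ k * (2 * M)) :=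
      lt_of_lt_of_le (Metric.mem_ball.1 hxb) hrk
    have := hFcov hx'
    simp only [Set.mem_iUnion] at this ⊢
    obtain ⟨z, hz, hxz⟩ := this
    exact ⟨z, hz, hxY, hxz⟩
  have hfinU : (⋃ z ∈ F, Y ∩ Metric.ball z (2 * M)).Finite :=
    Set.Finite.biUnion F.finite_toSet (fun z _ => (key z).finite)
  refine ⟨hfinU.subset hsub, ?_⟩
  calc (Y ∩ Metric.ball y r).ncard ≤ (⋃ z ∈ F, Y ∩ Metric.ball z (2 * M)).ncard :=
        Set.ncard_le_ncard hsub hfinU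
    _ ≤ F.card := bound F
    _ ≤ N := hFc
end

section
/- Being coarsely doubling is invariant under coarse equivalence: if f : X → Y is a coarse equivalence and Y is coarsely doubling, then X is coarsely doubling. -/
open Filter

lemma iter_cover {Y : Type*} [MetricSpace Y] {M : ℝ}
    (h : ∀ r : ℝ, M < r → ∃ n : ℕ, ∀ y : Y, ∃ F : Finset Y,
      F.card ≤ n ∧ Metric.ball y (2 * r) ⊆ ⋃ z ∈ F, Metric.ball z r)
    {s : ℝ} (hs : M < s) (hs0 : 0 < s) (k : ℕ) :
    ∃ N : ℕ, ∀ y : Y, ∃ F : Finset Y,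
      F.card ≤ N ∧ Metric.ball y (2 ^ k * s) ⊆ ⋃ z ∈ F, Metric.ball z s := by
  classical
  induction k with
  | zero => exact ⟨1, fun y => ⟨{y}, by simp, by simp⟩⟩
  | succ k ih =>
    obtain ⟨N, hN⟩ := ih
    have hks : M < 2 ^ k * s :=
      lt_of_lt_of_le hs (le_mul_of_one_le_left hs0.le (one_le_pow₀ one_le_two))
    obtain ⟨n, hn⟩ := h _ hks
    refine ⟨n * N, fun y => ?_⟩
    obtain ⟨F, hFc, hFs⟩ := hn y
    choose G hGc hGs using hN
    refine ⟨F.biUnion G, ?_, ?_⟩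
    · calc (F.biUnion G).card ≤ ∑ z ∈ F, (G z).card := Finset.card_biUnion_le
        _ ≤ ∑ _z ∈ F, N := Finset.sum_le_sum fun z _ => hGc z
        _ = F.card * N := by rw [Finset.sum_const, smul_eq_mul]
        _ ≤ n * N := Nat.mul_le_mul_right _ hFc
    · intro p hp
      have hp' : p ∈ Metric.ball y (2 * (2 ^ k * s)) := by
        have he : (2:ℝ) ^ (k + 1) * s = 2 * (2 ^ k * s) := by ring
        rwa [he] at hp
      obtain ⟨z, hz, hpz⟩ := Set.mem_iUnion₂.1 (hFs hp')
      obtain ⟨w, hw, hpw⟩ := Set.mem_iUnion₂.1 (hGs z hpz)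
      exact Set.mem_iUnion₂.2 ⟨w, Finset.mem_biUnion.2 ⟨z, hz, hw⟩, hpw⟩

/-- Corollary 5.11: being coarsely doubling is a coarse invariant:
if `f : X → Y` is a coarse equivalence (a coarse embedding with coarsely dense
image) and `Y` is coarsely doubling, then `X` is coarsely doubling. -/
theorem stmt_14 {X Y : Type*} [MetricSpace X] [MetricSpace Y] (f : X → Y)
    (hf : CoarseEmbedding f) (hdense : ∃ c : ℝ, 0 < c ∧ ∀ y : Y, ∃ x : X, dist y (f x) < c)
    (hY : CoarselyDoubling Y) : CoarselyDoubling X := by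
  classical
  obtain ⟨ρ₁, ρ₂, hρ₁m, hρ₂m, hρ₁t, _hρ₂t, hρ⟩ := hf
  obtain ⟨MY, hMY, hYd⟩ := hY
  -- choose R with ρ₁ r > 2 * MY for all r ≥ R
  obtain ⟨R, hR⟩ := (hρ₁t.eventually_gt_atTop (2 * MY)).exists_forall_of_atTop
  refine ⟨max R 1, lt_of_lt_of_le one_pos (le_max_right _ _), fun r hr => ?_⟩
  have hrR : R ≤ r := le_of_lt (lt_of_le_of_lt (le_max_left _ _) hr)
  have hρ₁r : 2 * MY < ρ₁ r := hR r hrR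
  set s : ℝ := ρ₁ r / 2 with hs_def
  have hsMY : MY < s := by
    rw [hs_def]; linarith
  have hs0 : 0 < s := lt_trans hMY hsMY
  obtain ⟨k, hk⟩ := pow_unbounded_of_one_lt (ρ₂ (2 * r) / s) (one_lt_two (α := ℝ))
  have hρ₂lt : ρ₂ (2 * r) < 2 ^ k * s := by
    rw [← div_lt_iff₀ hs0] at *
    · exact hk
  obtain ⟨N, hN⟩ := iter_cover hYd hsMY hs0 k
  refine ⟨N, fun x => ?_⟩
  obtain ⟨G, hGc, hGs⟩ := hN (f x)
  set g : Y → X := fun z =>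
    if h : ∃ x', x' ∈ Metric.ball x (2 * r) ∧ f x' ∈ Metric.ball z s then h.choose else x
    with hg_def
  refine ⟨G.image g, le_trans (Finset.card_image_le) hGc, ?_⟩
  intro x' hx'
  have hfx' : f x' ∈ Metric.ball (f x) (2 ^ k * s) := by
    have h1 : dist (f x') (f x) ≤ ρ₂ (dist x' x) := (hρ x' x).2
    have h2 : ρ₂ (dist x' x) ≤ ρ₂ (2 * r) := hρ₂m (le_of_lt (Metric.mem_ball.1 hx'))
    exact Metric.mem_ball.2 (lt_of_le_of_lt (h1.trans h2) hρ₂lt)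
  obtain ⟨z, hz, hfz⟩ := Set.mem_iUnion₂.1 (hGs hfx')
  have hex : ∃ x'', x'' ∈ Metric.ball x (2 * r) ∧ f x'' ∈ Metric.ball z s := ⟨x', hx', hfz⟩
  have hgz : g z ∈ Metric.ball x (2 * r) ∧ f (g z) ∈ Metric.ball z s := by
    rw [hg_def]; simp only [dif_pos hex]; exact hex.choose_spec
  refine Set.mem_iUnion₂.2 ⟨g z, Finset.mem_image_of_mem g hz, Metric.mem_ball.2 ?_⟩
  have hd : dist (f (g z)) (f x') < ρ₁ r := by
    have := dist_triangle (f (g z)) z (f x')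
    have h1 : dist (f (g z)) z < s := Metric.mem_ball.1 hgz.2
    have h2 : dist z (f x') < s := by rw [dist_comm]; exact Metric.mem_ball.1 hfz
    have : dist (f (g z)) (f x') < 2 * s := by linarith
    calc dist (f (g z)) (f x') < 2 * s := this
      _ = ρ₁ r := by rw [hs_def]; ring
  by_contra hge
  push_neg at hge
  rw [dist_comm] at hge
  exact absurd ((hρ₁m hge).trans (hρ (g z) x').1) (not_le.2 hd)
end

section
/- A metric space X is coarsely doubling if and only if there is R > 0 and a function N : (0,∞) → ℕ such that any s-ball in X can be covered by at most N(s) balls of radius R. -/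
/-- Proposition 5.9: a metric space `X` is coarsely doubling if and
only if there is `R > 0` and `N : (0,∞) → ℕ` such that any `s`-ball in `X` can be
covered by at most `N(s)` balls of radius `R`. -/
theorem stmt_15 {X : Type*} [MetricSpace X] :
    CoarselyDoubling X ↔
      ∃ R : ℝ, 0 < R ∧ ∃ N : ℝ → ℕ, ∀ s : ℝ, 0 < s → ∀ x : X, ∃ F : Finset X,
        F.card ≤ N s ∧ Metric.ball x s ⊆ ⋃ y ∈ F, Metric.ball y R := by
  constructor
  · rintro ⟨M, hM, H⟩
    classical
    refine ⟨2 * M, by linarith, ?_⟩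
    have key : ∀ k : ℕ, ∃ c : ℕ, ∀ x : X, ∃ F : Finset X, F.card ≤ c ∧
        Metric.ball x (2 ^ k * (2 * M)) ⊆ ⋃ y ∈ F, Metric.ball y (2 * M) := by
      intro k
      induction k with
      | zero =>
        refine ⟨1, fun x => ⟨{x}, by simp, ?_⟩⟩
        simp
      | succ k ih =>
        obtain ⟨c, hc⟩ := ih
        have h1 : (1 : ℝ) ≤ 2 ^ k := one_le_pow₀ (by norm_num)
        have hr : M < 2 ^ k * (2 * M) := by nlinarith
        obtain ⟨n, hn⟩ := H (2 ^ k * (2 * M)) hr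
        refine ⟨n * c, fun x => ?_⟩
        obtain ⟨F, hF, hFsub⟩ := hn x
        choose G hGcard hGsub using hc
        refine ⟨F.biUnion G, ?_, ?_⟩
        · exact le_trans (Finset.card_biUnion_le_card_mul F G c fun y _ => hGcard y)
            (Nat.mul_le_mul_right c hF)
        · intro z hz
          have hz' : z ∈ Metric.ball x (2 * (2 ^ k * (2 * M))) := by
            have e : (2:ℝ) ^ (k+1) * (2 * M) = 2 * (2 ^ k * (2 * M)) := by ring
            rwa [e] at hz
          obtain ⟨y, hyF, hzy⟩ := Set.mem_iUnion₂.1 (hFsub hz')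
          obtain ⟨w, hwG, hzw⟩ := Set.mem_iUnion₂.1 (hGsub y hzy)
          exact Set.mem_iUnion₂.2 ⟨w, Finset.mem_biUnion.2 ⟨y, hyF, hwG⟩, hzw⟩
    have key2 : ∀ s : ℝ, ∃ n : ℕ, 0 < s → ∀ x : X, ∃ F : Finset X,
        F.card ≤ n ∧ Metric.ball x s ⊆ ⋃ y ∈ F, Metric.ball y (2 * M) := by
      intro s
      by_cases hs : 0 < s
      · obtain ⟨k, hk⟩ := pow_unbounded_of_one_lt (s / (2 * M)) (one_lt_two)
        have hsk : s ≤ 2 ^ k * (2 * M) := by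
          rw [div_lt_iff₀ (by linarith)] at hk
          nlinarith
        obtain ⟨c, hcov⟩ := key k
        refine ⟨c, fun _ x => ?_⟩
        obtain ⟨F, hF, hFsub⟩ := hcov x
        exact ⟨F, hF, (Metric.ball_subset_ball hsk).trans hFsub⟩
      · exact ⟨0, fun h => absurd h hs⟩
    choose N hN using key2
    exact ⟨N, fun s hs x => hN s hs x⟩
  · rintro ⟨R, hR, N, hN⟩
    refine ⟨R, hR, fun r hr => ?_⟩
    refine ⟨N (2 * r), fun x => ?_⟩
    obtain ⟨F, hF, hFsub⟩ := hN (2 * r) (by linarith) x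
    refine ⟨F, hF, hFsub.trans ?_⟩
    exact Set.iUnion₂_mono fun y _ => Metric.ball_subset_ball (le_of_lt hr)
end

section
/- Let G₁, ..., G_n be non-trivial finite groups, H_n = G₁ × ... × G_n with word metric induced by the generators ∪_i ({1}×...×Σ_i×...×{1}) where Σ_i generates G_i. If A ⊆ H_n is contained in a ball B(1,M) with n > 3M + 2, then |halo(A)| ≥ |A|, where halo(A) is the set of points not in A whose 2-ball intersects A. -/
/-- The word length of `g` with respect to a generating set `S` (and its inverses). -/
noncomputable def wordLength {G : Type*} [Group G] (S : Set G) (g : G) : ℕ :=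
  sInf {k : ℕ | ∃ l : List G, l.length = k ∧ (∀ s ∈ l, s ∈ S ∨ s⁻¹ ∈ S) ∧ l.prod = g}

section aux

variable {G : Type*} [Group G] {S : Set G}

lemma wordLength_set_nonempty (hgen : Subgroup.closure S = ⊤) (g : G) :
    {k : ℕ | ∃ l : List G, l.length = k ∧ (∀ s ∈ l, s ∈ S ∨ s⁻¹ ∈ S) ∧ l.prod = g}.Nonempty := by
  have hg : g ∈ (Subgroup.closure S).toSubmonoid := by rw [hgen]; trivial
  rw [Subgroup.closure_toSubmonoid] at hg
  obtain ⟨l, hl, hp⟩ := Submonoid.exists_list_of_mem_closure hg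
  refine ⟨l.length, l, rfl, fun s hs => ?_, hp⟩
  rcases hl s hs with h | h
  · exact Or.inl h
  · exact Or.inr (by simpa using h)

lemma wordLength_one : wordLength S (1 : G) = 0 :=
  Nat.sInf_eq_zero.mpr (Or.inl ⟨[], rfl, by simp, rfl⟩)

lemma eq_one_of_wordLength_eq_zero (hgen : Subgroup.closure S = ⊤) {g : G}
    (h : wordLength S g = 0) : g = 1 := by
  rcases Nat.sInf_eq_zero.mp h with h0 | hemp
  · obtain ⟨l, hlen, -, hprod⟩ := h0
    rw [List.length_eq_zero_iff] at hlen
    simpa [hlen] using hprod.symm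
  · exact absurd hemp (Set.nonempty_iff_ne_empty.mp (wordLength_set_nonempty hgen g))

lemma one_le_wordLength (hgen : Subgroup.closure S = ⊤) {g : G} (h : g ≠ 1) :
    1 ≤ wordLength S g :=
  Nat.one_le_iff_ne_zero.mpr fun h0 => h (eq_one_of_wordLength_eq_zero hgen h0)

lemma wordLength_le_one {g : G} (h : g ∈ S ∨ g⁻¹ ∈ S) : wordLength S g ≤ 1 :=
  Nat.sInf_le ⟨[g], rfl, by simpa using h, by simp⟩

end aux

/-- Claim in Proposition 7.13: let `G i` (`i < n`) be non-trivial
finite groups with generating sets `S i`, and let `H_n = G 1 × ⋯ × G n` carry the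
word metric of the union of the coordinate-wise generating sets, i.e. the `l¹`-sum
`d(x,y) = ∑ i, wordLength (S i) ((x i)⁻¹ * y i)`.  If `A ⊆ H_n` is contained in the
ball `B(1,M)` and `n > 3M + 2`, then `|halo(A)| ≥ |A|`, where `halo(A)` is the set
of points not in `A` whose `2`-ball intersects `A` (points at distance `1` from `A`). -/
theorem stmt_19 {n : ℕ} (G : Fin n → Type*) [∀ i, Group (G i)] [∀ i, Fintype (G i)]
    [∀ i, Nontrivial (G i)] (S : ∀ i, Set (G i))
    (hgen : ∀ i, Subgroup.closure (S i) = ⊤)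
    (M : ℕ) (hn : 3 * M + 2 < n)
    (A : Set (∀ i, G i))
    (hA : ∀ x ∈ A, (∑ i, wordLength (S i) (x i)) < M) :
    A.ncard ≤
      {x : ∀ i, G i | x ∉ A ∧ ∃ a ∈ A,
        (∑ i, wordLength (S i) ((x i)⁻¹ * a i)) < 2}.ncard := by
  classical
  -- if M = 0 then A is empty
  rcases Nat.eq_zero_or_pos M with hM0 | hMpos
  · have : A = ∅ := by
      ext x; simp only [Set.mem_empty_iff_false, iff_false]
      intro hx; have := hA x hx; omega
    simp [this]
  -- choose a nontrivial generator in each factor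
  have hex : ∀ i, ∃ t ∈ S i, t ≠ 1 := by
    intro i
    by_contra h
    push_neg at h
    have hsub : S i ⊆ ({1} : Set (G i)) := fun t ht => h t ht
    have hle : Subgroup.closure (S i) ≤ Subgroup.closure {1} := Subgroup.closure_mono hsub
    rw [hgen i, Subgroup.closure_singleton_one] at hle
    obtain ⟨x, y, hxy⟩ := exists_pair_ne (G i)
    have hx : x = 1 := by simpa using hle (Subgroup.mem_top x)
    have hy : y = 1 := by simpa using hle (Subgroup.mem_top y)
    exact hxy (hx.trans hy.symm)
  choose s hsS hs1 using hex
  set Hl : Set (∀ i, G i) := {x : ∀ i, G i | x ∉ A ∧ ∃ a ∈ A,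
      (∑ i, wordLength (S i) ((x i)⁻¹ * a i)) < 2} with hHl
  have hwdef : ∀ x : ∀ i, G i, (∑ i, wordLength (S i) (x i)) = ∑ i, wordLength (S i) (x i) :=
    fun _ => rfl
  set w : (∀ i, G i) → ℕ := fun x => ∑ i, wordLength (S i) (x i) with hw
  -- support bound
  have hsupp : ∀ x : ∀ i, G i, (Finset.univ.filter (fun i => x i ≠ 1)).card ≤ w x := by
    intro x
    calc (Finset.univ.filter (fun i => x i ≠ 1)).card
        = ∑ i ∈ Finset.univ.filter (fun i => x i ≠ 1), 1 := by simp
      _ ≤ ∑ i ∈ Finset.univ.filter (fun i => x i ≠ 1), wordLength (S i) (x i) := by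
          refine Finset.sum_le_sum fun i hi => ?_
          exact one_le_wordLength (hgen i) (by simpa using (Finset.mem_filter.mp hi).2)
      _ ≤ ∑ i, wordLength (S i) (x i) :=
          Finset.sum_le_sum_of_subset (Finset.subset_univ _)
  set sA : Finset (∀ i, G i) := A.toFinset with hsA
  set sH : Finset (∀ i, G i) := Hl.toFinset with hsH
  set T : Finset (∀ i, G i) := sA ∪ sH with hT
  set r : (∀ i, G i) → (∀ i, G i) → Prop :=
    fun a x => ∃ i, a i = 1 ∧ x = Function.update a i (s i) with hr
  -- the word-length sum of an updated point
  have hwupd : ∀ (a : ∀ i, G i) (i : Fin n), a i = 1 →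
      w (Function.update a i (s i)) ≤ w a + 1 := by
    intro a i hai
    have key : ∀ j, wordLength (S j) (Function.update a i (s i) j)
        ≤ wordLength (S j) (a j) + (if j = i then 1 else 0) := by
      intro j
      by_cases hj : j = i
      · subst hj
        rw [Function.update_self, hai, wordLength_one]
        simpa using wordLength_le_one (Or.inl (hsS j))
      · rw [Function.update_of_ne hj]
        simp [hj]
    calc w (Function.update a i (s i))
        ≤ ∑ j, (wordLength (S j) (a j) + if j = i then 1 else 0) :=
          Finset.sum_le_sum fun j _ => key j
      _ = w a + 1 := by rw [Finset.sum_add_distrib]; simp [hw]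
  -- each update of a point of A lies in A ∪ halo
  have hmemT : ∀ a ∈ A, ∀ i : Fin n, a i = 1 → Function.update a i (s i) ∈ T := by
    intro a ha i hai
    by_cases hx : Function.update a i (s i) ∈ A
    · exact Finset.mem_union_left _ (by simpa [hsA] using hx)
    · refine Finset.mem_union_right _ ?_
      rw [hsH, Set.mem_toFinset]
      refine ⟨hx, a, ha, ?_⟩
      have hz : ∀ j, j ≠ i →
          wordLength (S j) ((Function.update a i (s i) j)⁻¹ * a j) = 0 := by
        intro j hj
        rw [Function.update_of_ne hj]
        simp [wordLength_one]
      rw [Fintype.sum_eq_single i hz, Function.update_self, hai, mul_one]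
      have : wordLength (S i) (s i)⁻¹ ≤ 1 :=
        wordLength_le_one (Or.inr (by simpa using hsS i))
      omega
  -- lower bound: every a ∈ A has many neighbours in T
  have hm : ∀ a ∈ sA, 2 * M + 4 ≤ (T.bipartiteAbove r a).card := by
    intro a haA
    have ha : a ∈ A := by simpa [hsA] using haA
    have hfree : (Finset.univ.filter (fun i => a i = 1)).card
        + (Finset.univ.filter (fun i => a i ≠ 1)).card = n := by
      rw [Finset.card_filter_add_card_filter_not]
      simp
    have hwa : w a < M := hA a ha
    have hsuppa : (Finset.univ.filter (fun i => a i ≠ 1)).card ≤ M - 1 := by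
      have := hsupp a
      omega
    have hinj : ∀ i ∈ Finset.univ.filter (fun i => a i = 1),
        Function.update a i (s i) ∈ T.bipartiteAbove r a := by
      intro i hi
      have hai : a i = 1 := by simpa using (Finset.mem_filter.mp hi).2
      rw [Finset.mem_bipartiteAbove]
      exact ⟨hmemT a ha i hai, ⟨i, hai, rfl⟩⟩
    have hcard : (Finset.univ.filter (fun i => a i = 1)).card
        ≤ (T.bipartiteAbove r a).card := by
      refine Finset.card_le_card_of_injOn (fun i => Function.update a i (s i)) hinj ?_
      intro i hi j hj hij
      by_contra hne
      have hai : a i = 1 := by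
        have := Finset.mem_coe.mp hi
        simpa using (Finset.mem_filter.mp this).2
      have heq : s i = a i := by
        have h := congrFun hij i
        simp only [Function.update_self, Function.update_of_ne hne] at h
        exact h
      rw [hai] at heq
      exact hs1 i heq
    omega
  -- upper bound: every x ∈ T has at most M predecessors in A
  have hnn : ∀ x ∈ T, (sA.bipartiteBelow r x).card ≤ M := by
    intro x hxT
    rcases Finset.eq_empty_or_nonempty (sA.bipartiteBelow r x) with he | ⟨a0, ha0⟩
    · rw [he]; simp
    -- x is an update of a point of A, so w x ≤ M
    obtain ⟨ha0A, i0, hi0, hx0⟩ := (Finset.mem_bipartiteBelow _).mp ha0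
    have ha0A' : a0 ∈ A := by simpa [hsA] using ha0A
    have hwa0 : w a0 < M := hA a0 ha0A'
    have hwx : w x ≤ M := by
      have := hwupd a0 i0 hi0
      rw [hx0]
      omega
    -- injection into the support of x
    have hcard : (sA.bipartiteBelow r x).card
        ≤ (Finset.univ.filter (fun i => x i ≠ 1)).card := by
      have hch : ∀ a ∈ sA.bipartiteBelow r x,
          ∃ i, a i = 1 ∧ x = Function.update a i (s i) :=
        fun a ha => ((Finset.mem_bipartiteBelow _).mp ha).2
      choose f hf1 hf2 using hch
      refine Finset.card_le_card_of_injOn (fun a => if h : a ∈ sA.bipartiteBelow r x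
        then f a h else i0) ?_ ?_
      · intro a ha
        have ha : a ∈ sA.bipartiteBelow r x := Finset.mem_coe.mp ha
        simp only [ha, dif_pos]
        rw [Finset.mem_coe, Finset.mem_filter]
        refine ⟨Finset.mem_univ _, ?_⟩
        have hx1 : x (f a ha) = s (f a ha) := by
          have := congrFun (hf2 a ha) (f a ha)
          simpa using this
        rw [hx1]
        exact hs1 _
      · intro a ha b hb hab
        have ha' : a ∈ sA.bipartiteBelow r x := Finset.mem_coe.mp ha
        have hb' : b ∈ sA.bipartiteBelow r x := Finset.mem_coe.mp hb
        simp only [ha', hb', dif_pos] at hab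
        have h1 : a = Function.update x (f a ha') 1 := by
          funext j
          by_cases hj : j = f a ha'
          · subst hj; rw [Function.update_self]; exact hf1 a ha'
          · rw [Function.update_of_ne hj, hf2 a ha', Function.update_of_ne hj]
        have h2 : b = Function.update x (f b hb') 1 := by
          funext j
          by_cases hj : j = f b hb'
          · subst hj; rw [Function.update_self]; exact hf1 b hb'
          · rw [Function.update_of_ne hj, hf2 b hb', Function.update_of_ne hj]
        rw [h1, h2, hab]
    exact le_trans hcard (le_trans (hsupp x) hwx)
  -- double counting
  have hdc := Finset.card_mul_le_card_mul (α := ∀ i, G i) (β := ∀ i, G i) r hm hnn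
  have hTle : T.card ≤ sA.card + sH.card := Finset.card_union_le _ _
  have hkey : sA.card * (2 * M + 4) ≤ (sA.card + sH.card) * M :=
    le_trans hdc (Nat.mul_le_mul_right M hTle)
  have hfin : sA.card ≤ sH.card := by nlinarith [hkey]
  rw [Set.ncard_eq_toFinset_card' A, Set.ncard_eq_toFinset_card' Hl]
  exact hfin
end
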